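/- Define the empirical error E(N, a₁, a₂) = (2(N+1) − 2(N−1) cos^{N−2}(2(a₁+a₂))) / (N(N−1)² sin²(a₂) (cos^{N−2}(a₂) + cos^{N−2}(2a₁+a₂))²). If a₁ = −c/√N and a₂ = c/√N for a constant c > 0, then N²·E(N, a₁, a₂) converges to 1/(c² e^{−c²}) as N → ∞. -/

import Mathlib

open Real Filter

/-- Empirical (method-of-moments) error at φ = 0 of the generalized protocol
e^{i a₂ J_z²} e^{−iφ J_y} e^{i a₁ J_z²}|+⟩^{⊗N}. -/
noncomputable def E (N : ℕ) (a₁ a₂ : ℝ) : ℝ :=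
  (2 * ((N : ℝ) + 1) - 2 * ((N : ℝ) - 1) * Real.cos (2 * (a₁ + a₂)) ^ (N - 2)) /
    ((N : ℝ) * ((N : ℝ) - 1) ^ 2 * Real.sin a₂ ^ 2 *
      (Real.cos a₂ ^ (N - 2) + Real.cos (2 * a₁ + a₂) ^ (N - 2)) ^ 2)

lemma cos_eq_one_sub (x : ℝ) : Real.cos x = 1 - 2 * Real.sin (x / 2) ^ 2 := by
  have h : (2 : ℝ) * (x / 2) = x := by ring
  have h2 := Real.cos_two_mul' (x / 2)
  rw [h] at h2
  have h3 := Real.sin_sq_add_cos_sq (x / 2)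
  nlinarith

lemma sin_div_lim : Tendsto (fun x : ℝ => Real.sin x / x) (nhdsWithin 0 {(0:ℝ)}ᶜ) (nhds 1) := by
  have h := hasDerivAt_iff_tendsto_slope.mp (Real.hasDerivAt_sin 0)
  rw [Real.cos_zero] at h
  refine h.congr fun x => ?_
  simp [slope_fun_def_field, Real.sin_zero]

lemma log_slope_lim : Tendsto (fun y : ℝ => Real.log y / (y - 1)) (nhdsWithin 1 {(1:ℝ)}ᶜ) (nhds 1) := by
  have h := hasDerivAt_iff_tendsto_slope.mp (Real.hasDerivAt_log (one_ne_zero))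
  rw [inv_one] at h
  refine h.congr fun x => ?_
  simp [slope_fun_def_field, Real.log_one]

lemma half_map : Tendsto (fun x : ℝ => x / 2) (nhdsWithin 0 {(0:ℝ)}ᶜ) (nhdsWithin 0 {(0:ℝ)}ᶜ) := by
  rw [tendsto_nhdsWithin_iff]
  constructor
  · have : Tendsto (fun x : ℝ => x / 2) (nhds 0) (nhds (0 / 2)) :=
      (tendsto_id (α := ℝ)).div_const 2
    simpa using this.mono_left nhdsWithin_le_nhds
  · filter_upwards [self_mem_nhdsWithin] with x hx
    simp only [Set.mem_compl_iff, Set.mem_singleton_iff] at hx ⊢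
    exact div_ne_zero hx two_ne_zero

lemma cos_sub_one_lim :
    Tendsto (fun x : ℝ => (Real.cos x - 1) / x ^ 2) (nhdsWithin 0 {(0:ℝ)}ᶜ) (nhds (-(1/2))) := by
  have hcomp := sin_div_lim.comp half_map
  have h2 : Tendsto (fun x : ℝ => -((Real.sin (x / 2) / (x / 2)) ^ 2 / 2))
      (nhdsWithin 0 {(0:ℝ)}ᶜ) (nhds (-(1 ^ 2 / 2))) := ((hcomp.pow 2).div_const 2).neg
  rw [one_pow] at h2
  refine h2.congr' ?_
  filter_upwards [self_mem_nhdsWithin] with x hx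
  simp only [Set.mem_compl_iff, Set.mem_singleton_iff] at hx
  rw [cos_eq_one_sub x]
  field_simp
  ring

lemma eventually_small : ∀ᶠ x : ℝ in nhdsWithin 0 {(0:ℝ)}ᶜ, |x| < 1 ∧ x ≠ 0 := by
  have h1 : ∀ᶠ x : ℝ in nhds 0, |x| < 1 := by
    have : Set.Ioo (-1 : ℝ) 1 ∈ nhds (0 : ℝ) := Ioo_mem_nhds (by norm_num) (by norm_num)
    filter_upwards [this] with x hx
    rw [abs_lt]; exact ⟨hx.1, hx.2⟩
  filter_upwards [h1.filter_mono nhdsWithin_le_nhds, self_mem_nhdsWithin] with x hx hx0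
  exact ⟨hx, hx0⟩

lemma cos_lt_one_small {x : ℝ} (h1 : |x| < 1) (h0 : x ≠ 0) : Real.cos x < 1 := by
  have hpi := Real.pi_gt_three
  have hs : Real.sin (x / 2) ≠ 0 := by
    rw [Ne, Real.sin_eq_zero_iff_of_lt_of_lt (by cases abs_lt.mp h1; linarith)
      (by cases abs_lt.mp h1; linarith)]
    intro h
    exact h0 (by linarith [h] )
  nlinarith [cos_eq_one_sub x, sq_pos_of_ne_zero hs]

lemma log_cos_lim :
    Tendsto (fun x : ℝ => Real.log (Real.cos x) / x ^ 2) (nhdsWithin 0 {(0:ℝ)}ᶜ) (nhds (-(1/2))) := by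
  have hcos : Tendsto (fun x : ℝ => Real.cos x) (nhdsWithin 0 {(0:ℝ)}ᶜ) (nhdsWithin 1 {(1:ℝ)}ᶜ) := by
    rw [tendsto_nhdsWithin_iff]
    constructor
    · have : Tendsto Real.cos (nhds 0) (nhds (Real.cos 0)) := Real.continuous_cos.continuousAt
      rw [Real.cos_zero] at this
      exact this.mono_left nhdsWithin_le_nhds
    · filter_upwards [eventually_small] with x hx
      simp only [Set.mem_compl_iff, Set.mem_singleton_iff]
      exact ne_of_lt (cos_lt_one_small hx.1 hx.2)
  have hfirst := log_slope_lim.comp hcos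
  have hprod := hfirst.mul cos_sub_one_lim
  rw [one_mul] at hprod
  refine hprod.congr' ?_
  filter_upwards [eventually_small] with x hx
  have hne : Real.cos x - 1 ≠ 0 := by
    have := cos_lt_one_small hx.1 hx.2; linarith
  simp only [Function.comp]
  field_simp

/-- If a₁ = −c/√N and a₂ = c/√N with c > 0, then N²·E(N,a₁,a₂) → 1/(c² e^{−c²}). -/
theorem stmt_6 (c : ℝ) (hc : 0 < c) :
    Tendsto (fun N : ℕ =>
        (N : ℝ) ^ 2 * E N (-c / Real.sqrt (N : ℝ)) (c / Real.sqrt (N : ℝ)))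
      atTop (nhds (1 / (c ^ 2 * Real.exp (-c ^ 2)))) := by
  set x : ℕ → ℝ := fun N => c / Real.sqrt N with hxdef
  -- √N → ∞
  have hs : Tendsto (fun N : ℕ => Real.sqrt N) atTop atTop := by
    have h1 := (tendsto_rpow_atTop (y := (1:ℝ)/2) (by norm_num)).comp
      tendsto_natCast_atTop_atTop (α := ℕ)
    exact h1.congr fun N => (Real.sqrt_eq_rpow _).symm
  have htend0 : Tendsto x atTop (nhds 0) := tendsto_const_nhds.div_atTop hs
  have hxpos : ∀ᶠ N : ℕ in atTop, 0 < x N := by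
    filter_upwards [eventually_ge_atTop 1] with N hN
    have : (0:ℝ) < Real.sqrt N := Real.sqrt_pos.mpr (by exact_mod_cast Nat.pos_of_ne_zero (by omega))
    exact div_pos hc this
  have hx0 : Tendsto x atTop (nhdsWithin 0 {(0:ℝ)}ᶜ) := by
    rw [tendsto_nhdsWithin_iff]
    refine ⟨htend0, ?_⟩
    filter_upwards [hxpos] with N hN
    simp only [Set.mem_compl_iff, Set.mem_singleton_iff]
    exact ne_of_gt hN
  have hxlt : ∀ᶠ N : ℕ in atTop, x N < 1 := by
    have : Set.Iio (1:ℝ) ∈ nhds (0:ℝ) := Iio_mem_nhds (by norm_num)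
    filter_upwards [htend0.eventually this] with N hN
    exact hN
  -- √N sin(x N) → c
  have hA : Tendsto (fun N : ℕ => Real.sqrt N * Real.sin (x N)) atTop (nhds c) := by
    have hsin := sin_div_lim.comp hx0
    have h1 : Tendsto (fun N : ℕ => c * (Real.sin (x N) / x N)) atTop (nhds (c * 1)) :=
      tendsto_const_nhds.mul hsin
    rw [mul_one] at h1
    refine h1.congr' ?_
    filter_upwards [hxpos, eventually_ge_atTop 1] with N hN hN1
    have hsq : (0:ℝ) < Real.sqrt N := by
      rcases div_pos_iff.mp hN with ⟨_, h⟩ | ⟨h, _⟩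
      · exact h
      · linarith
    rw [hxdef]
    field_simp
  -- cos(x N)^(N-2) → exp(-c²/2)
  have hB : Tendsto (fun N : ℕ => Real.cos (x N) ^ (N - 2)) atTop
      (nhds (Real.exp (-c ^ 2 / 2))) := by
    have hlog := log_cos_lim.comp hx0
    have hcoef : Tendsto (fun N : ℕ => ((N - 2 : ℕ) : ℝ) * x N ^ 2) atTop (nhds (c ^ 2)) := by
      have h2 : Tendsto (fun N : ℕ => c ^ 2 - 2 * c ^ 2 / (N : ℝ)) atTop (nhds (c ^ 2 - 0)) :=
        tendsto_const_nhds.sub (tendsto_const_div_atTop_nhds_zero_nat (2 * c ^ 2))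
      rw [sub_zero] at h2
      refine h2.congr' ?_
      filter_upwards [eventually_ge_atTop 2] with N hN
      have hN0 : (N : ℝ) ≠ 0 := Nat.cast_ne_zero.mpr (by omega)
      have hcast : ((N - 2 : ℕ) : ℝ) = (N : ℝ) - 2 := by
        rw [Nat.cast_sub hN]; norm_num
      have hxsq : x N ^ 2 = c ^ 2 / N := by
        show (c / Real.sqrt N) ^ 2 = _
        rw [div_pow, Real.sq_sqrt (Nat.cast_nonneg N)]
      rw [hcast, hxsq]
      field_simp
    have hmul := hcoef.mul hlog
    have hval : c ^ 2 * -(1/2 : ℝ) = -c ^ 2 / 2 := by ring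
    rw [hval] at hmul
    have hlog2 : Tendsto (fun N : ℕ => ((N - 2 : ℕ) : ℝ) * Real.log (Real.cos (x N))) atTop
        (nhds (-c ^ 2 / 2)) := by
      refine hmul.congr' ?_
      filter_upwards [hxpos] with N hN
      simp only [Function.comp]
      have : x N ≠ 0 := ne_of_gt hN
      field_simp
    have hexp := (Real.continuous_exp.tendsto _).comp hlog2
    refine hexp.congr' ?_
    filter_upwards [hxpos, hxlt] with N h1 h2
    have hcospos : 0 < Real.cos (x N) := by
      apply Real.cos_pos_of_mem_Ioo
      constructor
      · have := Real.pi_gt_three; linarith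
      · have := Real.pi_gt_three; linarith
    simp only [Function.comp]
    rw [Real.exp_nat_mul, Real.exp_log hcospos]
  -- N/(N-1) → 1
  have hN1 : Tendsto (fun N : ℕ => (N : ℝ) / ((N : ℝ) - 1)) atTop (nhds 1) := by
    have hden : Tendsto (fun N : ℕ => (N : ℝ) - 1) atTop atTop :=
      tendsto_atTop_add_const_right _ (-1) tendsto_natCast_atTop_atTop
    have h1 : Tendsto (fun N : ℕ => 1 + ((N : ℝ) - 1)⁻¹) atTop (nhds (1 + 0)) :=
      tendsto_const_nhds.add (tendsto_inv_atTop_zero.comp hden)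
    rw [add_zero] at h1
    refine h1.congr' ?_
    filter_upwards [eventually_ge_atTop 2] with N hN
    have : (N : ℝ) - 1 ≠ 0 := by
      have : (2:ℝ) ≤ (N:ℝ) := by exact_mod_cast hN
      intro h; linarith
    field_simp
    ring
  -- assemble
  have hc2 : (c ^ 2 : ℝ) ≠ 0 := by positivity
  have hB2 : (Real.exp (-c ^ 2 / 2)) ^ 2 ≠ 0 := by positivity
  have T : Tendsto (fun N : ℕ => ((N : ℝ) / ((N : ℝ) - 1)) ^ 2 *
      ((Real.sqrt N * Real.sin (x N)) ^ 2)⁻¹ * ((Real.cos (x N) ^ (N - 2)) ^ 2)⁻¹) atTop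
      (nhds ((1 : ℝ) ^ 2 * (c ^ 2)⁻¹ * ((Real.exp (-c ^ 2 / 2)) ^ 2)⁻¹)) :=
    ((hN1.pow 2).mul ((hA.pow 2).inv₀ hc2)).mul ((hB.pow 2).inv₀ hB2)
  have hval : (1 : ℝ) ^ 2 * (c ^ 2)⁻¹ * ((Real.exp (-c ^ 2 / 2)) ^ 2)⁻¹ =
      1 / (c ^ 2 * Real.exp (-c ^ 2)) := by
    rw [← Real.exp_nat_mul]
    norm_num
    rw [show (2:ℝ) * (-c ^ 2 / 2) = -c ^ 2 by ring]
    ring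
  rw [hval] at T
  refine T.congr' ?_
  filter_upwards [hxpos, hxlt, eventually_ge_atTop 2] with N h1 h2 hN
  have hsq : (0:ℝ) < Real.sqrt N := by
    rcases div_pos_iff.mp h1 with ⟨_, h⟩ | ⟨h, _⟩
    · exact h
    · linarith
  have hNne : (N : ℝ) ≠ 0 := by
    have : (2:ℝ) ≤ (N:ℝ) := by exact_mod_cast hN
    intro h; linarith
  have hN1ne : (N : ℝ) - 1 ≠ 0 := by
    have : (2:ℝ) ≤ (N:ℝ) := by exact_mod_cast hN
    intro h; linarith
  have hsinpos : 0 < Real.sin (x N) := by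
    apply Real.sin_pos_of_pos_of_lt_pi h1
    have := Real.pi_gt_three; linarith
  have hcospos : 0 < Real.cos (x N) := by
    apply Real.cos_pos_of_mem_Ioo
    constructor
    · have := Real.pi_gt_three; linarith
    · have := Real.pi_gt_three; linarith
  have hcp : (0:ℝ) < Real.cos (c / Real.sqrt N) ^ (N - 2) := pow_pos hcospos _
  have hcpne : Real.cos (c / Real.sqrt N) ^ (N - 2) ≠ 0 := ne_of_gt hcp
  have hsne : Real.sin (c / Real.sqrt N) ≠ 0 := ne_of_gt hsinpos
  have e1 : 2 * (-c / Real.sqrt N + c / Real.sqrt N) = 0 := by ring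
  have e2 : 2 * (-c / Real.sqrt N) + c / Real.sqrt N = -(c / Real.sqrt N) := by ring
  have hxv : x N = c / Real.sqrt N := rfl
  symm
  simp only [E, hxv]
  rw [e1, e2, Real.cos_zero, Real.cos_neg, one_pow]
  rw [mul_pow, Real.sq_sqrt (Nat.cast_nonneg N)]
  field_simp
  ring
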